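/- Rosenberg's Theorem on maximal clones on infinite sets. For every infinite set A, the set of maximal clones on A has cardinality 2^{2^{|A|}}. -/

import Mathlib

universe u

/-- The type of finitary operations (of positive arity `n + 1`) on `A`. -/
abbrev Ops (A : Type u) : Type u := Σ n : ℕ, (Fin (n + 1) → A) → A

/-- A set of finitary operations on `A` is a clone if it contains all projection
operations and is closed under composition. -/
def IsClone {A : Type u} (C : Set (Ops A)) : Prop :=
  (∀ (n : ℕ) (i : Fin (n + 1)), (⟨n, fun x => x i⟩ : Ops A) ∈ C) ∧
  ∀ (n m : ℕ) (f : (Fin (n + 1) → A) → A) (g : Fin (n + 1) → (Fin (m + 1) → A) → A),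
    (⟨n, f⟩ : Ops A) ∈ C → (∀ i, (⟨m, g i⟩ : Ops A) ∈ C) →
    (⟨m, fun x => f fun i => g i x⟩ : Ops A) ∈ C

/-- The clone generated by a set `F` of operations: the least clone containing `F`. -/
def cloneGen {A : Type u} (F : Set (Ops A)) : Set (Ops A) :=
  ⋂₀ {C : Set (Ops A) | IsClone C ∧ F ⊆ C}

/-- The clone of all projection operations on `A`. -/
def projClone (A : Type u) : Set (Ops A) :=
  {f : Ops A | ∃ i : Fin (f.1 + 1), f.2 = fun x => x i}

/-- A clone `M` is maximal if it is a proper subclone of the clone of all operations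
and the clone of all operations is the only clone properly containing it. -/
def IsMaximalClone {A : Type u} (M : Set (Ops A)) : Prop :=
  IsClone M ∧ M ≠ Set.univ ∧
    ∀ D : Set (Ops A), IsClone D → M ⊆ D → D = M ∨ D = Set.univ

/-- A clone `C` is minimal if the clone of projections is its unique proper subclone. -/
def IsMinimalClone {A : Type u} (C : Set (Ops A)) : Prop :=
  IsClone C ∧ C ≠ projClone A ∧
    ∀ D : Set (Ops A), IsClone D → D ⊆ C → D = projClone A ∨ D = C

/-- An `n`-ary operation `f` preserves a `k`-ary relation `ρ` if applying `f`
coordinatewise to tuples from `ρ` always yields a tuple in `ρ`. -/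
def Preserves {A : Type u} {n k : ℕ} (f : (Fin n → A) → A) (ρ : Set (Fin k → A)) : Prop :=
  ∀ t : Fin n → Fin k → A, (∀ i, t i ∈ ρ) → (fun j => f fun i => t i j) ∈ ρ

/-- `Pol ρ` is the clone of all operations preserving the relation `ρ`. -/
def Pol {A : Type u} {k : ℕ} (ρ : Set (Fin k → A)) : Set (Ops A) :=
  {f : Ops A | Preserves f.2 ρ}

namespace Rosenberg

open Cardinal

variable {A : Type u}

/-- The set of points where the diagonal of an operation is the identity. -/
def diagFix (f : Ops A) : Set A := {a | f.2 (fun _ => a) = a}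

/-- Operations whose diagonal is the identity "U-almost everywhere". -/
def Dset (U : Set (Set A)) : Set (Ops A) := {f | diagFix f ∈ U}

/-- A proper filter of subsets of `A`, given concretely. -/
structure GoodFam (U : Set (Set A)) : Prop where
  univ_mem : Set.univ ∈ U
  upward : ∀ {Z W : Set A}, Z ∈ U → Z ⊆ W → W ∈ U
  inter : ∀ {Z W : Set A}, Z ∈ U → W ∈ U → Z ∩ W ∈ U
  empty_not : (∅ : Set A) ∉ U

lemma GoodFam.iInter_mem {U : Set (Set A)} (hU : GoodFam U) :
    ∀ (m : ℕ) (S : Fin m → Set A), (∀ i, S i ∈ U) → (⋂ i, S i) ∈ U := by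
  intro m
  induction m with
  | zero =>
    intro S _
    have : (⋂ i, S i) = Set.univ := by simp
    rw [this]; exact hU.univ_mem
  | succ k ih =>
    intro S hS
    have : (⋂ i, S i) = S 0 ∩ ⋂ i : Fin k, S i.succ := by
      ext a; simp [Set.mem_iInter, Fin.forall_fin_succ]
    rw [this]
    exact hU.inter (hS 0) (ih _ fun i => hS i.succ)

lemma isClone_Dset {U : Set (Set A)} (hU : GoodFam U) : IsClone (Dset U) := by
  constructor
  · intro n i
    have : diagFix (⟨n, fun x => x i⟩ : Ops A) = Set.univ := by
      ext a; simp [diagFix]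
    show diagFix _ ∈ U
    rw [this]; exact hU.univ_mem
  · intro n m f g hf hg
    have hmem : (diagFix (⟨n, f⟩ : Ops A) ∩ ⋂ i, diagFix (⟨m, g i⟩ : Ops A)) ∈ U :=
      hU.inter hf (hU.iInter_mem _ _ fun i => hg i)
    refine hU.upward hmem ?_
    rintro a ⟨ha1, ha2⟩
    simp only [diagFix, Set.mem_iInter, Set.mem_setOf_eq] at ha1 ha2 ⊢
    have : (fun i => g i (fun _ => a)) = (fun _ : Fin (n+1) => a) := funext fun i => ha2 i
    rw [this, ha1]

lemma mem_Dset_of_diag_id {U : Set (Set A)} (hU : GoodFam U) (f : Ops A)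
    (hf : ∀ a, f.2 (fun _ => a) = a) : f ∈ Dset U := by
  have : diagFix f = Set.univ := Set.eq_univ_of_forall hf
  show diagFix f ∈ U
  rw [this]; exact hU.univ_mem

/-- A clone containing all diagonal-identity operations and a fixed-point-free unary
operation is the clone of all operations. -/
lemma clone_eq_univ (C : Set (Ops A)) (hC : IsClone C)
    (hD : ∀ f : Ops A, (∀ a, f.2 (fun _ => a) = a) → f ∈ C)
    (σ : (Fin 1 → A) → A) (hσC : (⟨0, σ⟩ : Ops A) ∈ C) (hσ : ∀ v, σ v ≠ v 0) :
    C = Set.univ := by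
  classical
  ext fh
  obtain ⟨n, h⟩ := fh
  simp only [Set.mem_univ, iff_true]
  set G : (Fin (n+1+1) → A) → A :=
    fun x => if x (Fin.last (n+1)) = x 0 then x 0 else h (fun i => x i.castSucc) with hGdef
  have hGC : (⟨n+1, G⟩ : Ops A) ∈ C := hD _ (by intro a; simp [hGdef])
  set g : Fin (n+1+1) → (Fin (n+1) → A) → A :=
    fun i => if h' : (i : ℕ) < n+1 then (fun x => x ⟨i, h'⟩) else (fun x => σ (fun _ => x 0))
    with hgdef
  have hgC : ∀ i, (⟨n, g i⟩ : Ops A) ∈ C := by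
    intro i
    by_cases h' : (i : ℕ) < n+1
    · simpa [hgdef, h', show (i : ℕ) ≤ n by omega] using hC.1 n ⟨i, h'⟩
    · have := hC.2 0 n σ (fun _ => fun x => x 0) hσC (fun _ => hC.1 n 0)
      simpa [hgdef, h', show ¬ (i : ℕ) ≤ n by omega] using this
  have hcomp := hC.2 (n+1) n G g hGC hgC
  have heq : (fun x => G fun i => g i x) = h := by
    funext x
    have h0 : g 0 x = x 0 := by simp [hgdef]
    have hlast : g (Fin.last (n+1)) x = σ (fun _ => x 0) := by simp [hgdef]
    have hcast : ∀ i : Fin (n+1), g i.castSucc x = x i := by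
      intro i
      have hi : ((i.castSucc : Fin (n+1+1)) : ℕ) < n + 1 := by simp [i.isLt]
      simp [hgdef, hi, Nat.lt_succ_iff.mp i.isLt]
    simp only [hGdef, hlast, h0, hcast]
    rw [if_neg (hσ _)]
  rwa [heq] at hcomp

lemma chain_bound {c : Set (Set (Ops A))} (hc : IsChain (· ⊆ ·) c) (hne : c.Nonempty) :
    ∀ (m : ℕ) (F : Fin m → Set (Ops A)), (∀ i, F i ∈ c) → ∃ C ∈ c, ∀ i, F i ⊆ C := by
  intro m
  induction m with
  | zero => exact fun F _ => ⟨hne.choose, hne.choose_spec, fun i => i.elim0⟩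
  | succ k ih =>
    intro F hF
    obtain ⟨C, hCc, hC⟩ := ih (fun i => F i.succ) (fun i => hF i.succ)
    rcases eq_or_ne (F 0) C with h | h
    · exact ⟨C, hCc, fun i => Fin.cases (h ▸ subset_rfl) hC i⟩
    · rcases hc (hF 0) hCc h with h1 | h1
      · exact ⟨C, hCc, fun i => Fin.cases h1 hC i⟩
      · exact ⟨F 0, hF 0, fun i => Fin.cases subset_rfl (fun j => (hC j).trans h1) i⟩

lemma isClone_sUnion {c : Set (Set (Ops A))} (hc : IsChain (· ⊆ ·) c) (hne : c.Nonempty)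
    (hcl : ∀ C ∈ c, IsClone C) : IsClone (⋃₀ c) := by
  constructor
  · intro n i
    obtain ⟨C, hC⟩ := hne
    exact ⟨C, hC, (hcl C hC).1 n i⟩
  · intro n m f g hf hg
    obtain ⟨Cf, hCfc, hfC⟩ := hf
    choose Cg hCgc hgC using hg
    obtain ⟨C, hCc, hsub⟩ := chain_bound hc hne (n+2) (Fin.cons Cf Cg)
      (fun i => Fin.cases hCfc hCgc i)
    refine ⟨C, hCc, (hcl C hCc).2 n m f g (hsub 0 hfC) (fun i => hsub i.succ ?_)⟩
    have : (Fin.cons Cf Cg : Fin (n+2) → Set (Ops A)) i.succ = Cg i := Fin.cons_succ _ _ _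
    rw [this]
    exact hgC i

variable [Infinite A]

noncomputable def s0 : A → A := fun a => (exists_ne a).choose

lemma s0_ne (a : A) : s0 a ≠ a := (exists_ne a).choose_spec

noncomputable def sOp : Ops A := ⟨0, fun v => s0 (v 0)⟩

/-- Every proper filter's clone extends to a maximal clone avoiding `sOp`. -/
lemma exists_maximal (U : Set (Set A)) (hU : GoodFam U) :
    ∃ M : Set (Ops A), IsMaximalClone M ∧ Dset U ⊆ M ∧ (sOp : Ops A) ∉ M := by
  set S : Set (Set (Ops A)) := {C | IsClone C ∧ Dset U ⊆ C ∧ (sOp : Ops A) ∉ C} with hS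
  have hDS : Dset U ∈ S := by
    refine ⟨isClone_Dset hU, subset_rfl, ?_⟩
    have : diagFix (sOp : Ops A) = ∅ := by
      ext a; simp [diagFix, sOp, s0_ne a]
    show diagFix _ ∈ U → False
    rw [this]; exact hU.empty_not
  have hchaincond : ∀ c ⊆ S, IsChain (· ⊆ ·) c → c.Nonempty →
      ∃ ub ∈ S, ∀ s ∈ c, s ⊆ ub := by
    intro c hcS hchain hcne
    refine ⟨⋃₀ c, ⟨isClone_sUnion hchain hcne (fun C hC => (hcS hC).1), ?_, ?_⟩,
      fun s hs => Set.subset_sUnion_of_mem hs⟩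
    · exact (hcS hcne.choose_spec).2.1.trans (Set.subset_sUnion_of_mem hcne.choose_spec)
    · rintro ⟨C, hCc, hsC⟩
      exact (hcS hCc).2.2 hsC
  obtain ⟨M, hMsub, hMmax⟩ := zorn_subset_nonempty S hchaincond (Dset U) hDS
  obtain ⟨⟨hMclone, hMD, hMs⟩, hMmax2⟩ := hMmax
  refine ⟨M, ⟨hMclone, ?_, ?_⟩, hMD, hMs⟩
  · intro h
    exact hMs (h ▸ Set.mem_univ _)
  · intro D hD hMDsub
    by_cases hs : (sOp : Ops A) ∈ D
    · right
      refine clone_eq_univ D hD (fun f hf => hMDsub (hMD (mem_Dset_of_diag_id hU f hf)))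
        (fun v => s0 (v 0)) hs (fun v => s0_ne (v 0))
    · left
      exact le_antisymm (hMmax2 ⟨hD, hMD.trans hMDsub, hs⟩ hMDsub) hMDsub

/-- Given a nonempty `X`, there are `f` fixing `X` pointwise and `g` fixing `Xᶜ`
pointwise whose composite is fixed-point-free. -/
lemma fpf_pair {X : Set A} (hX : X.Nonempty) :
    ∃ f g : A → A, (∀ a ∈ X, f a = a) ∧ (∀ a ∈ Xᶜ, g a = a) ∧ ∀ a, g (f a) ≠ a := by
  classical
  obtain ⟨x₀, hx₀⟩ := hX
  by_cases hcase : ∃ x₁ ∈ X, x₁ ≠ x₀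
  · obtain ⟨x₁, hx₁X, hx₁⟩ := hcase
    refine ⟨fun a => if a ∈ X then a else x₀,
      fun a => if a ∈ X then (if a = x₀ then x₁ else x₀) else a,
      fun a ha => if_pos ha, fun a ha => if_neg ha, ?_⟩
    intro a
    show ¬ (if (if a ∈ X then a else x₀) ∈ X then
        (if (if a ∈ X then a else x₀) = x₀ then x₁ else x₀)
      else (if a ∈ X then a else x₀)) = a
    by_cases ha : a ∈ X
    · simp only [if_pos ha]
      by_cases h0 : a = x₀
      · rw [if_pos h0]
        exact fun h => hx₁ (h.trans h0)
      · rw [if_neg h0]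
        exact fun h => h0 h.symm
    · simp only [if_neg ha, if_pos hx₀, if_pos rfl]
      exact fun h => ha (h ▸ hx₁X)
  · push_neg at hcase
    obtain ⟨y₁, hy₁⟩ := exists_ne x₀
    obtain ⟨y₂, hy₂⟩ := Infinite.exists_notMem_finset ({x₀, y₁} : Finset A)
    simp only [Finset.mem_insert, Finset.mem_singleton, not_or] at hy₂
    obtain ⟨hy₂0, hy₂1⟩ := hy₂
    have hy₁X : y₁ ∉ X := fun h => hy₁ (hcase y₁ h)
    have hy₂X : y₂ ∉ X := fun h => hy₂0 (hcase y₂ h)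
    refine ⟨fun a => if a ∈ X then a else (if a = y₁ then y₂ else y₁),
      fun a => if a ∈ X then y₁ else a, fun a ha => if_pos ha, fun a ha => if_neg ha, ?_⟩
    intro a
    show ¬ (if (if a ∈ X then a else (if a = y₁ then y₂ else y₁)) ∈ X then y₁
      else (if a ∈ X then a else (if a = y₁ then y₂ else y₁))) = a
    by_cases ha : a ∈ X
    · simp only [if_pos ha]
      have hax : a = x₀ := hcase a ha
      exact fun h => hy₁ (h.trans hax)
    · simp only [if_neg ha]
      by_cases h1 : a = y₁
      · simp only [if_pos h1, if_neg hy₂X]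
        exact fun h => hy₂1 (h.trans h1)
      · simp only [if_neg h1, if_neg hy₁X]
        exact fun h => h1 h.symm

/-- A clone above two filter-clones with a separating set is everything. -/
lemma univ_of_two (M : Set (Ops A)) (hM : IsClone M) {U V : Set (Set A)}
    (hU : GoodFam U) (hV : GoodFam V) (hUM : Dset U ⊆ M) (hVM : Dset V ⊆ M)
    {X : Set A} (hXne : X.Nonempty) (hXU : X ∈ U) (hXV : Xᶜ ∈ V) :
    M = Set.univ := by
  obtain ⟨f, g, hf, hg, hfg⟩ := fpf_pair hXne
  have hfM : (⟨0, fun v => f (v 0)⟩ : Ops A) ∈ M := by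
    apply hUM
    show diagFix _ ∈ U
    exact hU.upward hXU (fun a ha => hf a ha)
  have hgM : (⟨0, fun v => g (v 0)⟩ : Ops A) ∈ M := by
    apply hVM
    show diagFix _ ∈ V
    exact hV.upward hXV (fun a ha => hg a ha)
  have hcomp := hM.2 0 0 (fun v => g (v 0)) (fun _ => fun v => f (v 0)) hgM (fun _ => hfM)
  exact clone_eq_univ M hM (fun f' hf' => hUM (mem_Dset_of_diag_id hU f' hf'))
    (fun v => g (f (v 0))) hcomp (fun v => hfg (v 0))


section FKH

variable (A : Type u) [Infinite A]

/-- Code set for the independent family. -/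
abbrev Code : Type u := Finset A × Finset (Finset A)

lemma mk_code : #(Code A) = #A := by
  have h1 : #(Finset A) = #A := mk_finset_of_infinite A
  have h2 : #(Finset (Finset A)) = #(Finset A) := mk_finset_of_infinite (Finset A)
  calc #(Code A) = Cardinal.lift.{u} #(Finset A) * Cardinal.lift.{u} #(Finset (Finset A)) :=
        mk_prod _ _
    _ = #A * #A := by rw [Cardinal.lift_id, Cardinal.lift_id, h1, h2, h1]
    _ = #A := mul_eq_self (aleph0_le_mk A)

noncomputable def codeEquiv : Code A ≃ A := (Cardinal.eq.mp (mk_code A)).some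

open scoped Classical in
/-- Trace of a set on a finite set. -/
noncomputable def trace (X : Set A) (F : Finset A) : Finset A := F.filter (fun x => x ∈ X)

/-- The independent family, indexed by `Set A`. -/
noncomputable def fam (X : Set A) : Set A :=
  {a | trace A X ((codeEquiv A).symm a).1 ∈ ((codeEquiv A).symm a).2}

open scoped Classical in
noncomputable def sep (X Y : Set A) : A :=
  if h : ∃ a, (a ∈ X ∧ a ∉ Y) ∨ (a ∈ Y ∧ a ∉ X) then h.choose else Classical.arbitrary A

lemma sep_spec {X Y : Set A} (h : X ≠ Y) :
    (sep A X Y ∈ X ∧ sep A X Y ∉ Y) ∨ (sep A X Y ∈ Y ∧ sep A X Y ∉ X) := by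
  classical
  have hex : ∃ a, (a ∈ X ∧ a ∉ Y) ∨ (a ∈ Y ∧ a ∉ X) := by
    by_contra hcon
    push_neg at hcon
    apply h
    ext a
    have := hcon a
    tauto
  rw [sep, dif_pos hex]
  exact hex.choose_spec

/-- Independence of the family. -/
lemma fam_indep (s₁ s₂ : Finset (Set A)) (hd : ∀ X ∈ s₁, ∀ Y ∈ s₂, X ≠ Y) :
    ((⋂ X ∈ s₁, fam A X) ∩ ⋂ Y ∈ s₂, (fam A Y)ᶜ).Nonempty := by
  classical
  set F : Finset A := (s₁ ×ˢ s₂).image (fun p => sep A p.1 p.2) with hF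
  set G : Finset (Finset A) := s₁.image (fun X => trace A X F) with hG
  refine ⟨codeEquiv A (F, G), ?_, ?_⟩
  · rw [Set.mem_iInter₂]
    intro X hX
    show trace A X ((codeEquiv A).symm (codeEquiv A (F, G))).1 ∈
      ((codeEquiv A).symm (codeEquiv A (F, G))).2
    rw [Equiv.symm_apply_apply]
    exact Finset.mem_image.2 ⟨X, hX, rfl⟩
  · rw [Set.mem_iInter₂]
    intro Y hY
    intro hmem
    have : trace A Y ((codeEquiv A).symm (codeEquiv A (F, G))).1 ∈
        ((codeEquiv A).symm (codeEquiv A (F, G))).2 := hmem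
    rw [Equiv.symm_apply_apply] at this
    obtain ⟨X, hXs₁, hXY⟩ := Finset.mem_image.1 this
    have hne : X ≠ Y := hd X hXs₁ Y hY
    have hwF : sep A X Y ∈ F := by
      rw [hF]
      exact Finset.mem_image.2 ⟨(X, Y), Finset.mem_product.2 ⟨hXs₁, hY⟩, rfl⟩
    rcases sep_spec A hne with ⟨h1, h2⟩ | ⟨h1, h2⟩
    · have : sep A X Y ∈ trace A X F := by
        rw [trace]; exact Finset.mem_filter.2 ⟨hwF, h1⟩
      rw [hXY] at this
      rw [trace] at this
      exact h2 (Finset.mem_filter.1 this).2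
    · have : sep A X Y ∈ trace A Y F := by
        rw [trace]; exact Finset.mem_filter.2 ⟨hwF, h1⟩
      rw [← hXY] at this
      rw [trace] at this
      exact h2 (Finset.mem_filter.1 this).2

/-- The filter family indexed by sets of sets. -/
def UT (T : Set (Set A)) : Set (Set A) :=
  {Z | ∃ s₁ s₂ : Finset (Set A), ↑s₁ ⊆ T ∧ ↑s₂ ⊆ Tᶜ ∧
    ((⋂ X ∈ s₁, fam A X) ∩ ⋂ Y ∈ s₂, (fam A Y)ᶜ) ⊆ Z}

lemma goodFam_UT (T : Set (Set A)) : GoodFam (UT A T) := by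
  classical
  constructor
  · exact ⟨∅, ∅, by simp, by simp, Set.subset_univ _⟩
  · rintro Z W ⟨s₁, s₂, h1, h2, h3⟩ hZW
    exact ⟨s₁, s₂, h1, h2, h3.trans hZW⟩
  · rintro Z W ⟨s₁, s₂, h1, h2, h3⟩ ⟨t₁, t₂, g1, g2, g3⟩
    refine ⟨s₁ ∪ t₁, s₂ ∪ t₂, ?_, ?_, ?_⟩
    · rw [Finset.coe_union]; exact Set.union_subset h1 g1
    · rw [Finset.coe_union]; exact Set.union_subset h2 g2
    · intro a ha
      simp only [Set.mem_inter_iff, Set.mem_iInter] at ha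
      obtain ⟨ha1, ha2⟩ := ha
      constructor
      · refine h3 ⟨?_, ?_⟩ <;> simp only [Set.mem_iInter] <;> intro X hX
        · exact ha1 X (Finset.mem_union_left _ hX)
        · exact ha2 X (Finset.mem_union_left _ hX)
      · refine g3 ⟨?_, ?_⟩ <;> simp only [Set.mem_iInter] <;> intro X hX
        · exact ha1 X (Finset.mem_union_right _ hX)
        · exact ha2 X (Finset.mem_union_right _ hX)
  · rintro ⟨s₁, s₂, h1, h2, h3⟩
    obtain ⟨a, ha⟩ := fam_indep A s₁ s₂ (fun X hX Y hY heq => (h2 hY) (heq ▸ h1 hX))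
    exact (h3 ha)

lemma fam_mem_UT {T : Set (Set A)} {X : Set A} (hX : X ∈ T) : fam A X ∈ UT A T := by
  refine ⟨{X}, ∅, by simpa using hX, by simp, ?_⟩
  intro a ha
  simp only [Set.mem_inter_iff, Set.mem_iInter] at ha
  exact ha.1 X (Finset.mem_singleton_self X)

lemma fam_compl_mem_UT {T : Set (Set A)} {X : Set A} (hX : X ∉ T) : (fam A X)ᶜ ∈ UT A T := by
  refine ⟨∅, {X}, by simp, by simpa using hX, ?_⟩
  intro a ha
  simp only [Set.mem_inter_iff, Set.mem_iInter] at ha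
  exact ha.2 X (Finset.mem_singleton_self X)

lemma fam_nonempty (X : Set A) : (fam A X).Nonempty := by
  obtain ⟨a, ha⟩ := fam_indep A {X} ∅ (by simp)
  simp only [Set.mem_inter_iff, Set.mem_iInter] at ha
  exact ⟨a, ha.1 X (Finset.mem_singleton_self X)⟩

end FKH


section Main

variable (A : Type u) [Infinite A]

noncomputable def Mcl (T : Set (Set A)) : Set (Ops A) :=
  (exists_maximal (UT A T) (goodFam_UT A T)).choose

lemma Mcl_spec (T : Set (Set A)) :
    IsMaximalClone (Mcl A T) ∧ Dset (UT A T) ⊆ Mcl A T ∧ (sOp : Ops A) ∉ Mcl A T :=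
  (exists_maximal (UT A T) (goodFam_UT A T)).choose_spec

lemma Mcl_ne {T T' : Set (Set A)} {X : Set A} (h1 : X ∈ T) (h2 : X ∉ T') :
    Mcl A T ≠ Mcl A T' := by
  intro heq
  obtain ⟨hmax, hsub, hs⟩ := Mcl_spec A T
  obtain ⟨hmax', hsub', hs'⟩ := Mcl_spec A T'
  have huniv : Mcl A T = Set.univ :=
    univ_of_two (Mcl A T) hmax.1 (goodFam_UT A T) (goodFam_UT A T') hsub (heq ▸ hsub')
      (fam_nonempty A X) (fam_mem_UT A h1) (fam_compl_mem_UT A h2)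
  exact hmax.2.1 huniv

lemma Mcl_injective : Function.Injective (Mcl A) := by
  intro T T' heq
  by_contra hne
  have : ∃ X, (X ∈ T ∧ X ∉ T') ∨ (X ∈ T' ∧ X ∉ T) := by
    by_contra hcon
    push_neg at hcon
    apply hne
    ext X
    have := hcon X
    tauto
  obtain ⟨X, hX | hX⟩ := this
  · exact Mcl_ne A hX.1 hX.2 heq
  · exact Mcl_ne A hX.1 hX.2 heq.symm

lemma mk_ops_le : #(Ops A) ≤ 2 ^ #A := by
  classical
  have a0 : A := Classical.arbitrary A
  set enc : Ops A → Set (List A × A) := fun f =>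
    {p | p.1.length = f.1 + 1 ∧ f.2 (fun i => p.1.getD i a0) = p.2} with henc
  have hinj : Function.Injective enc := by
    rintro ⟨n, f⟩ ⟨m, g⟩ hfg
    have hmem : (List.replicate (n+1) a0, f (fun i => (List.replicate (n+1) a0).getD i a0)) ∈
        enc ⟨n, f⟩ := ⟨List.length_replicate, rfl⟩
    rw [hfg] at hmem
    have hnm : n = m := by
      have := hmem.1
      simp only [List.length_replicate] at this
      omega
    subst hnm
    have hfun : f = g := by
      funext x
      have harg : (fun i : Fin (n+1) => (List.ofFn x).getD (i : ℕ) a0) = x := by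
        funext i
        have hi : (i : ℕ) < (List.ofFn x).length := by simp [i.isLt]
        rw [List.getD_eq_getElem _ _ hi, List.getElem_ofFn]
      have hx : (List.ofFn x, f x) ∈ enc ⟨n, f⟩ := by
        refine ⟨List.length_ofFn, ?_⟩
        rw [harg]
      rw [hfg] at hx
      have := hx.2
      rw [harg] at this
      exact this.symm
    rw [hfun]
  calc #(Ops A) ≤ #(Set (List A × A)) := mk_le_of_injective hinj
    _ = 2 ^ #(List A × A) := mk_set
    _ = 2 ^ #A := by
        congr 1
        calc #(List A × A) = Cardinal.lift.{u} #(List A) * Cardinal.lift.{u} #A := mk_prod _ _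
          _ = #A * #A := by rw [Cardinal.lift_id, Cardinal.lift_id, mk_list_eq_mk]
          _ = #A := mul_eq_self (aleph0_le_mk A)

end Main

end Rosenberg

open Cardinal

/-- **Rosenberg's Theorem on maximal clones on infinite sets.**  For every infinite set
`A`, the set of maximal clones on `A` has cardinality `2 ^ (2 ^ |A|)`. -/
theorem rosenberg_infinite_maximal_clones {A : Type u} [Infinite A] :
    Cardinal.mk {M : Set (Ops A) // IsMaximalClone M} =
      (2 : Cardinal.{u}) ^ ((2 : Cardinal.{u}) ^ Cardinal.mk A) := by

  refine le_antisymm ?_ ?_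
  · calc #{M : Set (Ops A) // IsMaximalClone M} ≤ #(Set (Ops A)) := Cardinal.mk_subtype_le _
      _ = 2 ^ #(Ops A) := mk_set
      _ ≤ 2 ^ ((2 : Cardinal.{u}) ^ #A) :=
          Cardinal.power_le_power_left two_ne_zero (Rosenberg.mk_ops_le A)
  · have hinj : Function.Injective (fun T : Set (Set A) =>
        (⟨Rosenberg.Mcl A T, (Rosenberg.Mcl_spec A T).1⟩ :
          {M : Set (Ops A) // IsMaximalClone M})) := by
      intro T T' h
      exact Rosenberg.Mcl_injective A (congrArg Subtype.val h)
    have hle := Cardinal.mk_le_of_injective hinj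
    calc (2 : Cardinal.{u}) ^ ((2 : Cardinal.{u}) ^ #A) = #(Set (Set A)) := by
          rw [Cardinal.mk_set, Cardinal.mk_set]
      _ ≤ _ := hle
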